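/- A commutative cancellative monoid H is a valuation monoid if and only if H is a GCD-monoid which satisfies property (U). -/
import Mathlib


/-- `H` is a valuation monoid (inside its quotient group `K`). -/
def IsValuation {K : Type*} [CommGroup K] (H : Submonoid K) : Prop :=
  ∀ x : K, x ∈ H ∨ x⁻¹ ∈ H

/-- divisibility inside the submonoid `H`. -/
def DvdIn {K : Type*} [CommGroup K] (H : Submonoid K) (a b : K) : Prop :=
  ∃ c ∈ H, b = a * c

/-- `H` is a GCD-monoid: any two elements have a greatest common divisor. -/
def IsGCDMonoidIn {K : Type*} [CommGroup K] (H : Submonoid K) : Prop :=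
  ∀ a ∈ H, ∀ b ∈ H, ∃ t ∈ H, DvdIn H t a ∧ DvdIn H t b ∧
    ∀ s ∈ H, DvdIn H s a → DvdIn H s b → DvdIn H s t

/-- Property (U): every overmonoid `T` of `H` with `T = H·T^×` is a quotient
monoid `S⁻¹H` for some submonoid `S ⊆ H`. -/
def PropertyU {K : Type*} [CommGroup K] (H : Submonoid K) : Prop :=
  ∀ T : Submonoid K, H ≤ T →
    (∀ t ∈ T, ∃ h ∈ H, ∃ ε : K, ε ∈ T ∧ ε⁻¹ ∈ T ∧ t = h * ε) →
    ∃ S : Submonoid K, S ≤ H ∧ ∀ t : K, t ∈ T ↔ ∃ s ∈ S, ∃ x ∈ H, t = s⁻¹ * x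

section Aux

variable {K : Type*} [CommGroup K] (H : Submonoid K)

lemma dvdIn_iff {a b : K} : DvdIn H a b ↔ a⁻¹ * b ∈ H := by
  constructor
  · rintro ⟨c, hc, rfl⟩
    simpa using hc
  · intro h
    exact ⟨a⁻¹ * b, h, (mul_inv_cancel_left a b).symm⟩

/-- Euclid's lemma. -/
lemma euclid (hgcd : IsGCDMonoidIn H) (a b c : K) (ha : a ∈ H) (hb : b ∈ H) (hc : c ∈ H)
    (hcop : ∀ s ∈ H, s⁻¹ * a ∈ H → s⁻¹ * b ∈ H → s⁻¹ ∈ H)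
    (hdvd : a⁻¹ * (b * c) ∈ H) : a⁻¹ * c ∈ H := by
  obtain ⟨G, hG, hGa, hGb, huniv⟩ := hgcd (a * c) (mul_mem ha hc) (b * c) (mul_mem hb hc)
  rw [dvdIn_iff] at hGa hGb
  -- c divides both a*c and b*c, hence c ∣ G
  have hcG : c⁻¹ * G ∈ H := by
    rw [← dvdIn_iff]
    refine huniv c hc ?_ ?_ <;> rw [dvdIn_iff]
    · simpa [mul_comm] using ha
    · simpa [mul_comm] using hb
  -- f := c⁻¹ * G is a common divisor of a and b, hence a unit
  have hfa : (c⁻¹ * G)⁻¹ * a ∈ H := by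
    have : (c⁻¹ * G)⁻¹ * a = G⁻¹ * (a * c) := by
      simp [mul_inv_rev, mul_comm, mul_left_comm, mul_assoc]
    rw [this]; exact hGa
  have hfb : (c⁻¹ * G)⁻¹ * b ∈ H := by
    have : (c⁻¹ * G)⁻¹ * b = G⁻¹ * (b * c) := by
      simp [mul_inv_rev, mul_comm, mul_left_comm, mul_assoc]
    rw [this]; exact hGb
  have hf : (c⁻¹ * G)⁻¹ ∈ H := hcop _ hcG hfa hfb
  -- a divides both a*c and b*c, hence a ∣ G
  have haG : a⁻¹ * G ∈ H := by
    rw [← dvdIn_iff]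
    refine huniv a ha ?_ ?_ <;> rw [dvdIn_iff]
    · simpa using hc
    · exact hdvd
  have : a⁻¹ * c = (a⁻¹ * G) * (c⁻¹ * G)⁻¹ := by
    simp [mul_inv_rev, mul_comm, mul_left_comm, mul_assoc]
  rw [this]
  exact mul_mem haG hf

lemma euclid_pow (hgcd : IsGCDMonoidIn H) (a b : K) (ha : a ∈ H) (hb : b ∈ H)
    (hcop : ∀ s ∈ H, s⁻¹ * a ∈ H → s⁻¹ * b ∈ H → s⁻¹ ∈ H) :
    ∀ m : ℕ, a⁻¹ * b ^ m ∈ H → a⁻¹ ∈ H := by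
  intro m
  induction m with
  | zero => intro h; simpa using h
  | succ m ih =>
      intro h
      apply ih
      apply euclid H hgcd a b (b ^ m) ha hb (pow_mem hb m) hcop
      have : b * b ^ m = b ^ (m + 1) := (pow_succ' b m).symm
      rw [this]
      exact h

/-- key step: if `s⁻¹ = h₁ * (a/b)^m` with `m ≥ 1`, `s, h₁ ∈ H` and common
divisors of `a, b` are units, then `a⁻¹ ∈ H`. -/
lemma key_aux (hgcd : IsGCDMonoidIn H) (a b s h₁ : K) (ha : a ∈ H) (hb : b ∈ H)
    (hs : s ∈ H) (hh₁ : h₁ ∈ H)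
    (hcop : ∀ u ∈ H, u⁻¹ * a ∈ H → u⁻¹ * b ∈ H → u⁻¹ ∈ H)
    (m : ℕ) (hm : 0 < m) (heq : s⁻¹ = h₁ * (a * b⁻¹) ^ m) : a⁻¹ ∈ H := by
  have hsh : (a ^ m)⁻¹ * b ^ m = s * h₁ := by
    have h2 : (s * h₁)⁻¹ = (a * b⁻¹) ^ m := by
      rw [mul_inv_rev, heq, inv_mul_cancel_left]
    have h3 : s * h₁ = ((a * b⁻¹) ^ m)⁻¹ := by rw [← h2, inv_inv]
    rw [h3]
    simp [mul_pow, inv_pow, mul_inv_rev, mul_comm]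
  have hmem : a⁻¹ * b ^ m ∈ H := by
    obtain ⟨k, rfl⟩ : ∃ k, m = k + 1 := ⟨m - 1, (Nat.succ_pred_eq_of_pos hm).symm⟩
    have hkey : a⁻¹ * b ^ (k + 1) = ((a ^ (k + 1))⁻¹ * b ^ (k + 1)) * a ^ k := by
      rw [pow_succ a k, mul_inv_rev, mul_assoc, mul_assoc]
      congr 1
      rw [mul_comm (b ^ (k + 1)) (a ^ k), inv_mul_cancel_left]
    rw [hkey, hsh]
    exact mul_mem (mul_mem hs hh₁) (pow_mem ha k)
  exact euclid_pow H hgcd a b ha hb hcop (m + 0) (by simpa using hmem)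

end Aux

theorem stmt8 {K : Type*} [CommGroup K] (H : Submonoid K)
    (hquot : ∀ x : K, ∃ a ∈ H, ∃ b ∈ H, x = a * b⁻¹) :
    IsValuation H ↔ (IsGCDMonoidIn H ∧ PropertyU H) := by
  constructor
  · intro hval
    constructor
    · -- valuation ⇒ GCD
      intro a ha b hb
      rcases hval (a⁻¹ * b) with h | h
      · exact ⟨a, ha, ⟨1, one_mem _, (mul_one a).symm⟩,
          ⟨a⁻¹ * b, h, (mul_inv_cancel_left a b).symm⟩, fun s _ hsa _ => hsa⟩
      · refine ⟨b, hb, ⟨b⁻¹ * a, ?_, (mul_inv_cancel_left b a).symm⟩,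
          ⟨1, one_mem _, (mul_one b).symm⟩, fun s _ _ hsb => hsb⟩
        simpa [mul_inv_rev] using h
    · -- valuation ⇒ (U)
      intro T hHT _
      refine ⟨{ carrier := {s | s ∈ H ∧ s⁻¹ ∈ T},
                one_mem' := ⟨one_mem _, by simpa using one_mem T⟩,
                mul_mem' := fun h1 h2 => ⟨mul_mem h1.1 h2.1, by
                  rw [mul_inv_rev]; exact mul_mem h2.2 h1.2⟩ }, fun s hs => hs.1, ?_⟩
      intro t
      constructor
      · intro ht
        rcases hval t with h | h
        · exact ⟨1, ⟨one_mem _, by simpa using one_mem T⟩, t, h, by simp⟩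
        · exact ⟨t⁻¹, ⟨h, by simpa using ht⟩, 1, one_mem _, by simp⟩
      · rintro ⟨s, hs, y, hy, rfl⟩
        exact mul_mem hs.2 (hHT hy)
  · -- GCD + (U) ⇒ valuation
    rintro ⟨hgcd, hU⟩ x
    obtain ⟨a, ha, b, hb, rfl⟩ := hquot x
    obtain ⟨d, hd, hda, hdb, hduniv⟩ := hgcd a ha b hb
    rw [dvdIn_iff] at hda hdb
    set a' := d⁻¹ * a with ha'def
    set b' := d⁻¹ * b with hb'def
    have ha' : a' ∈ H := hda
    have hb' : b' ∈ H := hdb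
    have hx : a * b⁻¹ = a' * b'⁻¹ := by
      rw [ha'def, hb'def]
      simp [mul_inv_rev, mul_comm, mul_left_comm, mul_assoc]
    have hcop : ∀ s ∈ H, s⁻¹ * a' ∈ H → s⁻¹ * b' ∈ H → s⁻¹ ∈ H := by
      intro s hs hsa hsb
      have h1 : (d * s)⁻¹ * a ∈ H := by
        have : (d * s)⁻¹ * a = s⁻¹ * a' := by
          rw [ha'def]; simp [mul_inv_rev, mul_comm, mul_left_comm, mul_assoc]
        rw [this]; exact hsa
      have h2 : (d * s)⁻¹ * b ∈ H := by
        have : (d * s)⁻¹ * b = s⁻¹ * b' := by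
          rw [hb'def]; simp [mul_inv_rev, mul_comm, mul_left_comm, mul_assoc]
        rw [this]; exact hsb
      have h3 := hduniv (d * s) (mul_mem hd hs) ((dvdIn_iff H).mpr h1) ((dvdIn_iff H).mpr h2)
      rw [dvdIn_iff] at h3
      have : (d * s)⁻¹ * d = s⁻¹ := by
        simp [mul_inv_rev, mul_comm, mul_left_comm, mul_assoc]
      rwa [this] at h3
    -- build the overmonoid T = { h * (a'/b')^n : h ∈ H, n ∈ ℤ }
    set y := a' * b'⁻¹ with hydef
    let T : Submonoid K :=
      { carrier := {t | ∃ h ∈ H, ∃ n : ℤ, t = h * y ^ n},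
        one_mem' := ⟨1, one_mem _, 0, by simp⟩,
        mul_mem' := by
          rintro p q ⟨h1, hh1, n1, rfl⟩ ⟨h2, hh2, n2, rfl⟩
          exact ⟨h1 * h2, mul_mem hh1 hh2, n1 + n2, by
            rw [zpow_add]; simp [mul_comm, mul_left_comm, mul_assoc]⟩ }
    have hmemT : ∀ t : K, t ∈ T ↔ ∃ h ∈ H, ∃ n : ℤ, t = h * y ^ n := fun t => Iff.rfl
    obtain ⟨S, hSH, hTiff⟩ := hU T (fun h hh => (hmemT h).mpr ⟨h, hh, 0, by simp⟩)
      (by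
        rintro t ht
        obtain ⟨h, hh, n, rfl⟩ := (hmemT t).mp ht
        exact ⟨h, hh, y ^ n, (hmemT _).mpr ⟨1, one_mem _, n, (one_mul _).symm⟩,
          (hmemT _).mpr ⟨1, one_mem _, -n, by simp [zpow_neg]⟩, rfl⟩)
    have hyT : y ∈ T := (hmemT y).mpr ⟨1, one_mem _, 1, by simp⟩
    obtain ⟨s, hsS, h₀, hh₀, hxeq⟩ := (hTiff y).mp hyT
    have hs : s ∈ H := hSH hsS
    have hsinvT : s⁻¹ ∈ T := (hTiff s⁻¹).mpr ⟨s, hsS, 1, one_mem _, by simp⟩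
    obtain ⟨h₁, hh₁, n, hs1⟩ := (hmemT s⁻¹).mp hsinvT
    rw [hx]
    rcases lt_trichotomy n 0 with hn | hn | hn
    · -- n < 0 : b' is a unit, so a'/b' ∈ H
      left
      set m := (-n).toNat with hmdef
      have hmn : n = -(m : ℤ) := by omega
      have hm : 0 < m := by omega
      have heq : s⁻¹ = h₁ * (b' * a'⁻¹) ^ m := by
        rw [hs1, hmn]
        congr 1
        rw [zpow_neg, zpow_natCast, ← inv_pow, hydef]
        simp [mul_inv_rev, mul_comm]
      have hb'inv : b'⁻¹ ∈ H :=
        key_aux H hgcd b' a' s h₁ hb' ha' hs hh₁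
          (fun u hu hub hua => hcop u hu hua hub) m hm heq
      rw [hydef]
      exact mul_mem ha' hb'inv
    · -- n = 0 : y ∈ H directly
      left
      subst hn
      rw [hxeq, hs1]
      simpa using mul_mem hh₁ hh₀
    · -- n > 0 : a' is a unit, so b'/a' ∈ H
      right
      set m := n.toNat with hmdef
      have hmn : n = (m : ℤ) := by omega
      have hm : 0 < m := by omega
      have heq : s⁻¹ = h₁ * (a' * b'⁻¹) ^ m := by
        rw [hs1, hmn, zpow_natCast, hydef]
      have ha'inv : a'⁻¹ ∈ H :=
        key_aux H hgcd a' b' s h₁ ha' hb' hs hh₁ hcop m hm heq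
      have hflip : (a' * b'⁻¹)⁻¹ = b' * a'⁻¹ := by
        simp [mul_inv_rev, mul_comm]
      rw [hydef, hflip]
      exact mul_mem hb' ha'inv
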